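/- arXiv:2409.03136 — 2 statements merged into one kernel-verified Lean document; each statement's English description precedes it below -/
import Mathlib

section
/- Let S_T be a symmetric positive definite (K+1)×(K+1) real matrix and S_B a symmetric positive semi-definite (K+1)×(K+1) real matrix, written in block form S_T = [[T_x, t_x],[t_xᵀ, t_z]] and S_B = [[B_x, b_x],[b_xᵀ, b_z]] where T_x, B_x are K×K. Then trace(S_T⁻¹ S_B) ≥ trace(T_x⁻¹ B_x). In other words, Pillai's trace is non-decreasing when a new variable is added. -/
open Matrix

lemma my_trace_fromBlocks {m n : Type*} [Fintype m] [Fintype n]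
    (A : Matrix m m ℝ) (B : Matrix m n ℝ) (C : Matrix n m ℝ) (D : Matrix n n ℝ) :
    Matrix.trace (fromBlocks A B C D) = Matrix.trace A + Matrix.trace D := by
  simp [Matrix.trace, Fintype.sum_sum_type, fromBlocks]

lemma my_trace_mul_nonneg {n : Type*} [Fintype n] [DecidableEq n]
    {P Q : Matrix n n ℝ} (hP : P.PosSemidef) (hQ : Q.PosSemidef) :
    0 ≤ Matrix.trace (P * Q) := by
  obtain ⟨A, rfl⟩ : ∃ A : Matrix n n ℝ, P = Aᴴ * A := by
    open scoped MatrixOrder in exact CStarAlgebra.nonneg_iff_eq_star_mul_self.mp hP.nonneg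
  obtain ⟨B, rfl⟩ : ∃ B : Matrix n n ℝ, Q = Bᴴ * B := by
    open scoped MatrixOrder in exact CStarAlgebra.nonneg_iff_eq_star_mul_self.mp hQ.nonneg
  have h : Matrix.trace (Aᴴ * A * (Bᴴ * B)) = Matrix.trace ((A * Bᴴ)ᴴ * (A * Bᴴ)) := by
    rw [conjTranspose_mul, conjTranspose_conjTranspose,
      Matrix.trace_mul_cycle B Aᴴ (A * Bᴴ), Matrix.trace_mul_comm]
    simp only [Matrix.mul_assoc]
    rw [Matrix.trace_mul_comm A (Bᴴ * (B * Aᴴ))]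
    simp only [Matrix.mul_assoc]
  rw [h]
  have : Matrix.trace ((A * Bᴴ)ᴴ * (A * Bᴴ)) = ∑ j, ∑ i, ((A * Bᴴ) i j)^2 := by
    simp [Matrix.trace, Matrix.mul_apply, conjTranspose_apply, Matrix.diag, sq, mul_comm]
  rw [this]
  positivity

/-- Pillai's trace is non-decreasing when a new variable is added:
if `S_T = [[T_x, t_x],[t_xᵀ, t_z]]` is positive definite and
`S_B = [[B_x, b_x],[b_xᵀ, b_z]]` is positive semi-definite, then
`trace(S_T⁻¹ S_B) ≥ trace(T_x⁻¹ B_x)`. -/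
theorem pillai_trace_nondecreasing (K : ℕ)
    (Tx Bx : Matrix (Fin K) (Fin K) ℝ)
    (tx bx : Matrix (Fin K) (Fin 1) ℝ)
    (tz bz : Matrix (Fin 1) (Fin 1) ℝ)
    (hT : (Matrix.fromBlocks Tx tx txᵀ tz).PosDef)
    (hB : (Matrix.fromBlocks Bx bx bxᵀ bz).PosSemidef) :
    Matrix.trace (Tx⁻¹ * Bx) ≤
      Matrix.trace ((Matrix.fromBlocks Tx tx txᵀ tz)⁻¹ *
        Matrix.fromBlocks Bx bx bxᵀ bz) := by
  classical
  set S : Matrix (Fin K ⊕ Fin 1) (Fin K ⊕ Fin 1) ℝ := fromBlocks Tx tx txᵀ tz with hSdef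
  set Bm : Matrix (Fin K ⊕ Fin 1) (Fin K ⊕ Fin 1) ℝ := fromBlocks Bx bx bxᵀ bz with hBmdef
  have htxH : txᴴ = txᵀ := by ext i j; simp [conjTranspose_apply]
  have hTxH : Tx.IsHermitian := by
    ext i j
    have := congrFun (congrFun hT.1 (Sum.inl i)) (Sum.inl j)
    simpa [hSdef, conjTranspose_apply, fromBlocks] using this
  have hTx : Tx.PosDef := by
    refine PosDef.of_dotProduct_mulVec_pos hTxH fun x hx => ?_
    have hx' : (Sum.elim x 0 : Fin K ⊕ Fin 1 → ℝ) ≠ 0 := by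
      intro h
      exact hx (funext fun i => congrFun h (Sum.inl i))
    have h := hT.dotProduct_mulVec_pos hx'
    simpa [hSdef, dotProduct, Fintype.sum_sum_type, mulVec, fromBlocks] using h
  haveI iTx : Invertible Tx := hTx.isUnit.invertible
  haveI iS : Invertible S := hT.isUnit.invertible
  haveI is0 : Invertible (tz - txᵀ * ⅟Tx * tx) :=
    invertibleOfFromBlocks₁₁Invertible Tx tx txᵀ tz
  set s : Matrix (Fin 1) (Fin 1) ℝ := tz - txᵀ * Tx⁻¹ * tx with hsdef
  haveI is1 : Invertible s := is0.copy s (by rw [hsdef, invOf_eq_nonsing_inv])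
  have hSinv : S⁻¹ =
      fromBlocks (Tx⁻¹ + Tx⁻¹ * tx * s⁻¹ * txᵀ * Tx⁻¹) (-(Tx⁻¹ * tx * s⁻¹))
        (-(s⁻¹ * txᵀ * Tx⁻¹)) s⁻¹ := by
    have h := invOf_fromBlocks₁₁_eq Tx tx txᵀ tz
    simp only [invOf_eq_nonsing_inv] at h
    rw [← hsdef] at h
    exact h
  -- s is positive semidefinite
  have hsPSD : s.PosSemidef := by
    have h1 : (fromBlocks Tx tx txᴴ tz).PosSemidef := by rw [htxH]; exact hT.posSemidef
    have h2 := (PosDef.fromBlocks₁₁ tx tz hTx).mp h1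
    rwa [htxH, ← hsdef] at h2
  have hs00 : 0 < s 0 0 := by
    have hnn : 0 ≤ s 0 0 := by
      have := hsPSD.dotProduct_mulVec_nonneg (fun _ => 1)
      simpa [dotProduct, mulVec, Fin.sum_univ_one] using this
    have hne : s 0 0 ≠ 0 := by
      have hu : IsUnit s.det := (Matrix.isUnit_iff_isUnit_det s).mp (isUnit_of_invertible s)
      simpa [Matrix.det_fin_one, isUnit_iff_ne_zero] using hu
    exact hnn.lt_of_ne (Ne.symm hne)
  have hsPD : s.PosDef := by
    refine PosDef.of_dotProduct_mulVec_pos hsPSD.1 fun x hx => ?_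
    have hx0 : x 0 ≠ 0 := by
      intro h
      exact hx (funext fun i => by rw [Subsingleton.elim i 0]; exact h)
    have hq : dotProduct (star x) (s *ᵥ x) = s 0 0 * (x 0 * x 0) := by
      simp [dotProduct, mulVec, Fin.sum_univ_one]; ring
    rw [hq]
    exact mul_pos hs00 (mul_self_pos.mpr hx0)
  have hsinvPSD : (s⁻¹).PosSemidef := hsPD.inv.posSemidef
  set U : Matrix (Fin K ⊕ Fin 1) (Fin 1) ℝ := fromRows (-(Tx⁻¹ * tx)) 1 with hUdef
  have hUps : (U * s⁻¹ * Uᴴ).PosSemidef := hsinvPSD.mul_mul_conjTranspose_same U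
  have hkey : S⁻¹ = fromBlocks Tx⁻¹ 0 0 0 + U * s⁻¹ * Uᴴ := by
    rw [hSinv, hUdef, conjTranspose_fromRows_eq_fromCols_conjTranspose, fromRows_mul,
      fromRows_mul_fromCols, fromBlocks_add, fromBlocks_inj]
    refine ⟨?_, ?_, ?_, ?_⟩
    · simp only [conjTranspose_neg, conjTranspose_mul, hTxH.inv.eq, htxH, Matrix.neg_mul, Matrix.mul_neg,
        neg_neg, Matrix.mul_assoc]
    · simp [Matrix.mul_assoc]
    · simp only [conjTranspose_neg, conjTranspose_mul, hTxH.inv.eq, htxH, Matrix.neg_mul, Matrix.mul_neg,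
        neg_neg, Matrix.one_mul, zero_add, Matrix.mul_assoc]
    · simp
  have hPB : Matrix.trace ((fromBlocks Tx⁻¹ 0 0 0 : Matrix (Fin K ⊕ Fin 1) (Fin K ⊕ Fin 1) ℝ)
      * Bm) = Matrix.trace (Tx⁻¹ * Bx) := by
    rw [hBmdef]
    simp [fromBlocks_multiply, my_trace_fromBlocks]
  have hexp : Matrix.trace (S⁻¹ * Bm) =
      Matrix.trace (Tx⁻¹ * Bx) + Matrix.trace ((U * s⁻¹ * Uᴴ) * Bm) := by
    rw [hkey, add_mul, trace_add, hPB]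
  rw [hexp]
  have h2 : 0 ≤ Matrix.trace ((U * s⁻¹ * Uᴴ) * Bm) := my_trace_mul_nonneg hUps hB
  linarith
end

section
/- Let S_T = [[T_x, t_x],[t_xᵀ, t_z]] be symmetric positive definite and S_B = [[B_x, b_x],[b_xᵀ, b_z]] symmetric positive semi-definite, with t_x = 0. Then trace(S_T⁻¹ S_B) − trace(T_x⁻¹ B_x) = b_z / t_z. -/
open Matrix

/-- When the cross-covariance `t_x` is zero, the increment in Pillai's trace
equals `b_z / t_z`. -/
theorem pillai_trace_increment_indep (K : ℕ)
    (Tx Bx : Matrix (Fin K) (Fin K) ℝ)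
    (bx : Matrix (Fin K) (Fin 1) ℝ)
    (tz bz : Matrix (Fin 1) (Fin 1) ℝ)
    (hT : (Matrix.fromBlocks Tx 0 0 tz).PosDef)
    (hB : (Matrix.fromBlocks Bx bx bxᵀ bz).PosSemidef) :
    Matrix.trace ((Matrix.fromBlocks Tx 0 0 tz)⁻¹ *
        Matrix.fromBlocks Bx bx bxᵀ bz) -
      Matrix.trace (Tx⁻¹ * Bx) = bz 0 0 / tz 0 0 := by
  have hdet : (Matrix.fromBlocks Tx 0 0 tz).det = Tx.det * tz.det :=
    Matrix.det_fromBlocks_zero₂₁ Tx 0 tz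
  have hdpos : 0 < (Matrix.fromBlocks Tx 0 0 tz).det := hT.det_pos
  rw [hdet] at hdpos
  have hTx : Tx.det ≠ 0 := fun h => by simp [h] at hdpos
  have htz : tz.det ≠ 0 := fun h => by rw [h] at hdpos; simp at hdpos
  have hinv : (Matrix.fromBlocks Tx 0 0 tz)⁻¹ =
      Matrix.fromBlocks Tx⁻¹ (-(Tx⁻¹ * (0 : Matrix (Fin K) (Fin 1) ℝ) * tz⁻¹)) 0 tz⁻¹ :=
    Matrix.inv_fromBlocks_zero₂₁_of_isUnit_iff Tx 0 tz
      (iff_of_true ((Matrix.isUnit_iff_isUnit_det Tx).mpr (isUnit_iff_ne_zero.mpr hTx))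
        ((Matrix.isUnit_iff_isUnit_det tz).mpr (isUnit_iff_ne_zero.mpr htz)))
  rw [hinv]
  have htr : ∀ (A : Matrix (Fin K) (Fin K) ℝ) (B : Matrix (Fin K) (Fin 1) ℝ)
      (C : Matrix (Fin 1) (Fin K) ℝ) (D : Matrix (Fin 1) (Fin 1) ℝ),
      (Matrix.fromBlocks A B C D).trace = A.trace + D.trace := by
    intros A B C D
    simp [Matrix.trace, Matrix.diag, Fintype.sum_sum_type]
  simp only [Matrix.mul_zero, Matrix.zero_mul, neg_zero, Matrix.fromBlocks_multiply,
    add_zero, zero_add, htr, add_sub_cancel_left]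
  have htz00 : tz 0 0 ≠ 0 := by
    rwa [Matrix.det_fin_one] at htz
  rw [Matrix.trace_fin_one, Matrix.mul_apply, Fin.sum_univ_one,
    Matrix.inv_def, Matrix.adjugate_fin_one, Matrix.det_fin_one]
  simp [div_eq_mul_inv, mul_comm]
end
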